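/- Let M > 0 be the unique solution of 1 − α_μ − β_μ = 1/μ, where α_μ = (1/√μ)·arctan(k₀²/√μ) and β_μ = (1/√μ)·arctan(k₁²/√μ). Define q*(x) = M for x ∈ [α_M, 1 − β_M] and q*(x) = 0 otherwise. Then q* ≥ 0, ∫₀¹ q* dx = 1, λ₁(q*) = M, and for every q ∈ L¹[0,1] with q ≥ 0 a.e. and ∫₀¹ q dx = 1 one has λ₁(q) ≤ M; consequently sup{λ₁(q) : q ∈ L¹[0,1], q ≥ 0 a.e., ∫₀¹ q dx = 1} = M and the supremum is attained at q*. -/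

import Mathlib

open MeasureTheory Set Real Filter
open scoped Interval

/-- A test function on `[0,1]`: `y` is absolutely continuous on `[0,1]` with
derivative `g` belonging to `L²[0,1]`. -/
def IsTest (y g : ℝ → ℝ) : Prop :=
  (∀ x ∈ Icc (0:ℝ) 1, y x = y 0 + ∫ t in (0:ℝ)..x, g t) ∧
  IntegrableOn g (Icc (0:ℝ) 1) ∧
  IntegrableOn (fun x => (g x) ^ 2) (Icc (0:ℝ) 1)

/-- The set of Rayleigh quotients of test functions for the Sturm–Liouville problem
`-y'' + q y = λ y`, `y'(0) - k₀² y(0) = 0`, `y'(1) + k₁² y(1) = 0`. -/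
def RayleighSet (k0 k1 : ℝ) (q : ℝ → ℝ) : Set ℝ :=
  { r : ℝ | ∃ y g : ℝ → ℝ, IsTest y g ∧ (0 < ∫ x in (0:ℝ)..1, (y x) ^ 2) ∧
      r = ((∫ x in (0:ℝ)..1, ((g x) ^ 2 + q x * (y x) ^ 2))
            + k0 ^ 2 * (y 0) ^ 2 + k1 ^ 2 * (y 1) ^ 2) / (∫ x in (0:ℝ)..1, (y x) ^ 2) }

/-- The first eigenvalue `λ₁(q)` defined as the infimum of the Rayleigh quotient. -/
noncomputable def lam1 (k0 k1 : ℝ) (q : ℝ → ℝ) : ℝ :=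
  sInf (RayleighSet k0 k1 q)

/-- `alphaCoef k μ = (1/√μ) · arctan(k²/√μ)`. -/
noncomputable def alphaCoef (k μ : ℝ) : ℝ :=
  (1 / Real.sqrt μ) * Real.arctan (k ^ 2 / Real.sqrt μ)

/-- The optimal potential for `M₁⁺`: equal to `M` on `[α_M, 1 - β_M]` and `0` otherwise. -/
noncomputable def qstar (k0 k1 M : ℝ) : ℝ → ℝ :=
  fun x => if alphaCoef k0 M ≤ x ∧ x ≤ 1 - alphaCoef k1 M then M else 0


lemma ibp_core {z : ℝ} (hz : 0 ≤ z) {f g : ℝ → ℝ}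
    (hf : IntegrableOn f (Ioc 0 z)) (hg : IntegrableOn g (Ioc 0 z)) :
    ∫ t in Ioc (0:ℝ) z, ((∫ s in Ioc (0:ℝ) t, f s) * g t + f t * (∫ s in Ioc (0:ℝ) t, g s))
      = (∫ s in Ioc (0:ℝ) z, f s) * (∫ s in Ioc (0:ℝ) z, g s) := by
  set μ := volume.restrict (Ioc (0:ℝ) z) with hμ
  have hfIcc : IntegrableOn f (Icc 0 z) := by
    rwa [integrableOn_Icc_iff_integrableOn_Ioc]
  have hgIcc : IntegrableOn g (Icc 0 z) := by
    rwa [integrableOn_Icc_iff_integrableOn_Ioc]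
  have hIf : ContinuousOn (fun t => ∫ s in Ioc (0:ℝ) t, f s) (Icc 0 z) :=
    intervalIntegral.continuousOn_primitive hfIcc
  have hIg : ContinuousOn (fun t => ∫ s in Ioc (0:ℝ) t, g s) (Icc 0 z) :=
    intervalIntegral.continuousOn_primitive hgIcc
  have h1 : IntegrableOn (fun t => (∫ s in Ioc (0:ℝ) t, f s) * g t) (Ioc 0 z) :=
    (MeasureTheory.IntegrableOn.continuousOn_mul hIf hgIcc isCompact_Icc).mono_set
      Ioc_subset_Icc_self
  have h2 : IntegrableOn (fun t => f t * (∫ s in Ioc (0:ℝ) t, g s)) (Ioc 0 z) :=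
    (MeasureTheory.IntegrableOn.mul_continuousOn hfIcc hIg isCompact_Icc).mono_set
      Ioc_subset_Icc_self
  rw [integral_add h1 h2]
  -- the two double-integral representations
  set P1 : ℝ × ℝ → ℝ := fun p => ({q : ℝ × ℝ | q.2 ≤ q.1}.indicator (fun q => f q.2 * g q.1)) p
    with hP1def
  set P2 : ℝ × ℝ → ℝ := fun p => ({q : ℝ × ℝ | q.2 < q.1}.indicator (fun q => f q.1 * g q.2)) p
    with hP2def
  have hP1int : Integrable P1 (μ.prod μ) := by
    have : Integrable (fun q : ℝ × ℝ => f q.2 * g q.1) (μ.prod μ) := by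
      have := (hg.mul_prod hf : Integrable (fun q : ℝ × ℝ => g q.1 * f q.2) (μ.prod μ))
      simpa [mul_comm] using this
    exact this.indicator (measurableSet_le measurable_snd measurable_fst)
  have hP2int : Integrable P2 (μ.prod μ) := by
    exact (hf.mul_prod hg).indicator (measurableSet_lt measurable_snd measurable_fst)
  have hT1 : ∫ t in Ioc (0:ℝ) z, (∫ s in Ioc (0:ℝ) t, f s) * g t = ∫ p, P1 p ∂(μ.prod μ) := by
    rw [integral_prod P1 hP1int]
    refine (setIntegral_congr_fun measurableSet_Ioc fun t ht => ?_).symm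
    have : ∀ s : ℝ, P1 (t, s) = (Iic t).indicator f s * g t := by
      intro s
      by_cases h : s ≤ t <;> simp [hP1def, indicator, h]
    simp_rw [this]
    rw [integral_mul_const, setIntegral_indicator measurableSet_Iic]
    congr 1
    rw [Ioc_inter_Iic, min_eq_right ht.2]
  have hT2 : ∫ t in Ioc (0:ℝ) z, f t * (∫ s in Ioc (0:ℝ) t, g s) = ∫ p, P2 p ∂(μ.prod μ) := by
    rw [integral_prod P2 hP2int]
    refine (setIntegral_congr_fun measurableSet_Ioc fun t ht => ?_).symm
    have : ∀ s : ℝ, P2 (t, s) = f t * (Iio t).indicator g s := by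
      intro s
      by_cases h : s < t <;> simp [hP2def, indicator, h]
    have hset2 : Ioc (0:ℝ) z ∩ Iio t = Ioo 0 t := by
      ext s
      simp only [mem_inter_iff, mem_Ioc, mem_Iio, mem_Ioo]
      constructor
      · rintro ⟨⟨h0, _⟩, hst⟩; exact ⟨h0, hst⟩
      · rintro ⟨h0, hst⟩; exact ⟨⟨h0, le_trans hst.le ht.2⟩, hst⟩
    simp_rw [this]
    rw [integral_const_mul, setIntegral_indicator measurableSet_Iio, hset2,
      ← integral_Ioc_eq_integral_Ioo]
  have hT2' : ∫ p, P2 p ∂(μ.prod μ)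
      = ∫ s in Ioc (0:ℝ) z, ((∫ u in Ioc (0:ℝ) z, f u) - (∫ u in Ioc (0:ℝ) s, f u)) * g s := by
    rw [integral_prod_symm P2 hP2int]
    refine setIntegral_congr_fun measurableSet_Ioc fun s hs => ?_
    have : ∀ t : ℝ, P2 (t, s) = (Ioi s).indicator f t * g s := by
      intro t
      by_cases h : s < t <;> simp [hP2def, indicator, h]
    simp_rw [this]
    rw [integral_mul_const, setIntegral_indicator measurableSet_Ioi]
    congr 1
    have hset : Ioc (0:ℝ) z ∩ Ioi s = Ioc s z := by
      ext t
      simp only [mem_inter_iff, mem_Ioc, mem_Ioi]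
      constructor
      · rintro ⟨⟨_, h2⟩, h3⟩; exact ⟨h3, h2⟩
      · rintro ⟨h1, h2⟩; exact ⟨⟨lt_trans hs.1 h1, h2⟩, h1⟩
    rw [hset, eq_sub_iff_add_eq, add_comm, ← setIntegral_union (Ioc_disjoint_Ioc_of_le le_rfl) measurableSet_Ioc
      (hf.mono_set (Ioc_subset_Ioc_right hs.2)) (hf.mono_set (Ioc_subset_Ioc_left hs.1.le)),
      Ioc_union_Ioc_eq_Ioc hs.1.le hs.2]
  have h3 : IntegrableOn
      (fun s => ((∫ u in Ioc (0:ℝ) z, f u) - (∫ u in Ioc (0:ℝ) s, f u)) * g s) (Ioc 0 z) := by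
    simpa [sub_mul, Pi.sub_def, IntegrableOn] using ((hg.const_mul (∫ u in Ioc (0:ℝ) z, f u)).sub h1)
  rw [hT2, hT2', ← integral_add h1 h3]
  have : ∀ t : ℝ, (∫ s in Ioc (0:ℝ) t, f s) * g t
      + ((∫ u in Ioc (0:ℝ) z, f u) - (∫ u in Ioc (0:ℝ) t, f u)) * g t
      = (∫ u in Ioc (0:ℝ) z, f u) * g t := fun t => by ring
  simp_rw [this]
  rw [integral_const_mul]

/-- Integration by parts for indefinite integrals. -/
lemma ibp {z : ℝ} (hz : 0 ≤ z) {f g F G : ℝ → ℝ}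
    (hf : IntegrableOn f (Icc 0 z)) (hg : IntegrableOn g (Icc 0 z))
    (hF : ∀ x ∈ Icc (0:ℝ) z, F x = F 0 + ∫ t in (0:ℝ)..x, f t)
    (hG : ∀ x ∈ Icc (0:ℝ) z, G x = G 0 + ∫ t in (0:ℝ)..x, g t) :
    ∫ t in (0:ℝ)..z, (F t * g t + f t * G t) = F z * G z - F 0 * G 0 := by
  have hf' : IntegrableOn f (Ioc 0 z) := hf.mono_set Ioc_subset_Icc_self
  have hg' : IntegrableOn g (Ioc 0 z) := hg.mono_set Ioc_subset_Icc_self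
  have hIf : ContinuousOn (fun t => ∫ s in Ioc (0:ℝ) t, f s) (Icc 0 z) :=
    intervalIntegral.continuousOn_primitive hf
  have hIg : ContinuousOn (fun t => ∫ s in Ioc (0:ℝ) t, g s) (Icc 0 z) :=
    intervalIntegral.continuousOn_primitive hg
  have h1 : IntegrableOn (fun t => (∫ s in Ioc (0:ℝ) t, f s) * g t) (Ioc 0 z) :=
    (MeasureTheory.IntegrableOn.continuousOn_mul hIf hg isCompact_Icc).mono_set
      Ioc_subset_Icc_self
  have h2 : IntegrableOn (fun t => f t * (∫ s in Ioc (0:ℝ) t, g s)) (Ioc 0 z) :=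
    (MeasureTheory.IntegrableOn.mul_continuousOn hf hIg isCompact_Icc).mono_set
      Ioc_subset_Icc_self
  rw [intervalIntegral.integral_of_le hz]
  have hcong : ∫ t in Ioc (0:ℝ) z, (F t * g t + f t * G t)
      = ∫ t in Ioc (0:ℝ) z, ((F 0) * g t + (G 0) * f t
          + ((∫ s in Ioc (0:ℝ) t, f s) * g t + f t * (∫ s in Ioc (0:ℝ) t, g s))) := by
    refine setIntegral_congr_fun measurableSet_Ioc fun t ht => ?_
    rw [hF t (Ioc_subset_Icc_self ht), hG t (Ioc_subset_Icc_self ht),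
      intervalIntegral.integral_of_le ht.1.le, intervalIntegral.integral_of_le ht.1.le]
    ring
  rw [hcong]
  have hsum : IntegrableOn (fun t => (∫ s in Ioc (0:ℝ) t, f s) * g t
      + f t * (∫ s in Ioc (0:ℝ) t, g s)) (Ioc 0 z) := h1.add h2
  have i1 : IntegrableOn (fun t => F 0 * g t + G 0 * f t) (Ioc 0 z) :=
    (hg'.const_mul (F 0)).add (hf'.const_mul (G 0))
  have i2 : IntegrableOn (fun t => F 0 * g t) (Ioc 0 z) := hg'.const_mul (F 0)
  have i3 : IntegrableOn (fun t => G 0 * f t) (Ioc 0 z) := hf'.const_mul (G 0)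
  rw [integral_add i1 hsum, integral_add i2 i3,
    integral_const_mul, integral_const_mul, ibp_core hz hf' hg']
  rw [hF z ⟨hz, le_refl z⟩, hG z ⟨hz, le_refl z⟩,
    intervalIntegral.integral_of_le hz, intervalIntegral.integral_of_le hz]
  ring


namespace SL

noncomputable def cP (k1 M : ℝ) : ℝ := 1 - alphaCoef k1 M

noncomputable def uu (k0 k1 M : ℝ) : ℝ → ℝ := fun x =>
  if x < alphaCoef k0 M then Real.sqrt M * Real.tan (Real.sqrt M * (alphaCoef k0 M - x))
  else if x ≤ cP k1 M then 0
  else -(Real.sqrt M * Real.tan (Real.sqrt M * (x - cP k1 M)))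

noncomputable def vv (k0 k1 M : ℝ) : ℝ → ℝ := fun x =>
  if x < alphaCoef k0 M ∨ cP k1 M < x then -(M + (uu k0 k1 M x) ^ 2) else 0

noncomputable def ww (k0 k1 M : ℝ) : ℝ → ℝ := fun x =>
  if x < alphaCoef k0 M then Real.cos (Real.sqrt M * (x - alphaCoef k0 M))
  else if x ≤ cP k1 M then 1
  else Real.cos (Real.sqrt M * (x - cP k1 M))

lemma hs {M : ℝ} (hM : 0 < M) : 0 < Real.sqrt M := Real.sqrt_pos.2 hM
lemma hs2 {M : ℝ} (hM : 0 < M) : Real.sqrt M ^ 2 = M := Real.sq_sqrt hM.le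

lemma ha0 {k0 M : ℝ} (hM : 0 < M) : 0 ≤ alphaCoef k0 M := by
  unfold alphaCoef
  have h := hs hM
  have h2 : 0 ≤ Real.arctan (k0 ^ 2 / Real.sqrt M) := by
    rw [← Real.arctan_zero]
    exact Real.arctan_strictMono.monotone (by positivity)
  positivity

lemma hsa {k0 M : ℝ} (hM : 0 < M) :
    Real.sqrt M * alphaCoef k0 M = Real.arctan (k0 ^ 2 / Real.sqrt M) := by
  unfold alphaCoef
  have h := (hs hM).ne'
  field_simp

lemma hsa_lt {k0 M : ℝ} (hM : 0 < M) : Real.sqrt M * alphaCoef k0 M < π / 2 := by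
  rw [hsa hM]; exact Real.arctan_lt_pi_div_two _

lemma hsa_nonneg {k0 M : ℝ} (hM : 0 < M) : 0 ≤ Real.sqrt M * alphaCoef k0 M :=
  mul_nonneg (hs hM).le (ha0 hM)

lemma tan_hsa {k0 M : ℝ} (hM : 0 < M) :
    Real.tan (Real.sqrt M * alphaCoef k0 M) = k0 ^ 2 / Real.sqrt M := by
  rw [hsa hM]; exact Real.tan_arctan _

lemma hab {k0 k1 M : ℝ} (hM : 0 < M)
    (hMeq : 1 - alphaCoef k0 M - alphaCoef k1 M = 1 / M) :
    alphaCoef k0 M + alphaCoef k1 M < 1 := by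
  have : (0:ℝ) < 1 / M := by positivity
  linarith

lemma hac {k0 k1 M : ℝ} (hM : 0 < M)
    (hMeq : 1 - alphaCoef k0 M - alphaCoef k1 M = 1 / M) :
    alphaCoef k0 M ≤ cP k1 M := by
  have : (0:ℝ) < 1 / M := by positivity
  unfold cP; linarith

lemma hc1 {k1 M : ℝ} (hM : 0 < M) : cP k1 M ≤ 1 := by
  unfold cP; have := ha0 (k0 := k1) hM; linarith

lemma hc0 {k0 k1 M : ℝ} (hM : 0 < M)
    (hMeq : 1 - alphaCoef k0 M - alphaCoef k1 M = 1 / M) : 0 < cP k1 M := by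
  have h1 := ha0 (k0 := k0) hM
  have : (0:ℝ) < 1 / M := by positivity
  unfold cP; linarith

lemma cos_pos_left {k0 M : ℝ} (hM : 0 < M) {t : ℝ} (ht0 : 0 ≤ t)
    (hta : t ≤ alphaCoef k0 M) :
    0 < Real.cos (Real.sqrt M * (alphaCoef k0 M - t)) := by
  apply Real.cos_pos_of_mem_Ioo
  have h1 := hsa_nonneg (k0 := k0) hM
  have h2 := hsa_lt (k0 := k0) hM
  have h3 := Real.pi_div_two_pos
  have h4 := (hs hM).le
  constructor
  · nlinarith
  · nlinarith

lemma cos_pos_right {k0 k1 M : ℝ} (hM : 0 < M)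
    (hMeq : 1 - alphaCoef k0 M - alphaCoef k1 M = 1 / M) {t : ℝ}
    (htc : cP k1 M ≤ t) (ht1 : t ≤ 1) :
    0 < Real.cos (Real.sqrt M * (t - cP k1 M)) := by
  apply Real.cos_pos_of_mem_Ioo
  have h1 := hsa_nonneg (k0 := k1) hM
  have h2 := hsa_lt (k0 := k1) hM
  have h3 := Real.pi_div_two_pos
  have h4 := (hs hM).le
  have h5 : t - cP k1 M ≤ alphaCoef k1 M := by unfold cP at htc ⊢; linarith
  constructor
  · nlinarith
  · nlinarith


namespace Deriv

lemma measurable_tan' : Measurable Real.tan := by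
  have : Real.tan = fun x => Real.sin x / Real.cos x :=
    funext fun x => Real.tan_eq_sin_div_cos x
  rw [this]
  exact Real.continuous_sin.measurable.div Real.continuous_cos.measurable

lemma hasDerivAt_U1 {k0 M : ℝ} (hM : 0 < M) {t : ℝ}
    (hc : Real.cos (Real.sqrt M * (alphaCoef k0 M - t)) ≠ 0) :
    HasDerivAt (fun x => Real.sqrt M * Real.tan (Real.sqrt M * (alphaCoef k0 M - x)))
      (-(M + (Real.sqrt M * Real.tan (Real.sqrt M * (alphaCoef k0 M - t))) ^ 2)) t := by
  set s := Real.sqrt M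
  set a := alphaCoef k0 M
  have h1 : HasDerivAt (fun x : ℝ => s * (a - x)) (-s) t := by
    simpa using (((hasDerivAt_id t).const_sub a).const_mul s)
  have h2 := (Real.hasDerivAt_tan hc).comp t h1
  have h3 := h2.const_mul s
  refine h3.congr_deriv (Eq.symm ?_)
  have h4 : (1 + Real.tan (s * (a - t)) ^ 2)⁻¹ = Real.cos (s * (a - t)) ^ 2 :=
    Real.inv_one_add_tan_sq hc
  have hcos2 : Real.cos (s * (a - t)) ^ 2 ≠ 0 := pow_ne_zero 2 hc
  have h5 : 1 / Real.cos (s * (a - t)) ^ 2 = 1 + Real.tan (s * (a - t)) ^ 2 := by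
    rw [← h4]; field_simp
  rw [h5]
  have hs2' : s ^ 2 = M := Real.sq_sqrt hM.le
  nlinarith [hs2']

lemma hasDerivAt_U3 {k1 M : ℝ} (hM : 0 < M) {t : ℝ}
    (hc : Real.cos (Real.sqrt M * (t - cP k1 M)) ≠ 0) :
    HasDerivAt (fun x => -(Real.sqrt M * Real.tan (Real.sqrt M * (x - cP k1 M))))
      (-(M + (-(Real.sqrt M * Real.tan (Real.sqrt M * (t - cP k1 M)))) ^ 2)) t := by
  set s := Real.sqrt M
  set c := cP k1 M
  have h1 : HasDerivAt (fun x : ℝ => s * (x - c)) s t := by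
    simpa using (((hasDerivAt_id t).sub_const c).const_mul s)
  have h2 := (Real.hasDerivAt_tan hc).comp t h1
  have h3 := (h2.const_mul s).neg
  refine h3.congr_deriv (Eq.symm ?_)
  have h4 : (1 + Real.tan (s * (t - c)) ^ 2)⁻¹ = Real.cos (s * (t - c)) ^ 2 :=
    Real.inv_one_add_tan_sq hc
  have hcos2 : Real.cos (s * (t - c)) ^ 2 ≠ 0 := pow_ne_zero 2 hc
  have h5 : 1 / Real.cos (s * (t - c)) ^ 2 = 1 + Real.tan (s * (t - c)) ^ 2 := by
    rw [← h4]; field_simp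
  rw [h5]
  have hs2' : s ^ 2 = M := Real.sq_sqrt hM.le
  nlinarith [hs2']

lemma hasDerivAt_W1 {k0 M : ℝ} (hM : 0 < M) {t : ℝ}
    (hc : Real.cos (Real.sqrt M * (alphaCoef k0 M - t)) ≠ 0) :
    HasDerivAt (fun x => Real.cos (Real.sqrt M * (x - alphaCoef k0 M)))
      ((Real.sqrt M * Real.tan (Real.sqrt M * (alphaCoef k0 M - t)))
        * Real.cos (Real.sqrt M * (t - alphaCoef k0 M))) t := by
  set s := Real.sqrt M
  set a := alphaCoef k0 M
  have h1 : HasDerivAt (fun x : ℝ => s * (x - a)) s t := by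
    simpa using (((hasDerivAt_id t).sub_const a).const_mul s)
  have h2 := (Real.hasDerivAt_cos (s * (t - a))).comp t h1
  refine h2.congr_deriv (Eq.symm ?_)
  have e1 : s * (t - a) = -(s * (a - t)) := by ring
  rw [Real.tan_eq_sin_div_cos, e1, Real.sin_neg, Real.cos_neg]
  field_simp
lemma hasDerivAt_W3 {k1 M : ℝ} (hM : 0 < M) {t : ℝ}
    (hc : Real.cos (Real.sqrt M * (t - cP k1 M)) ≠ 0) :
    HasDerivAt (fun x => Real.cos (Real.sqrt M * (x - cP k1 M)))
      ((-(Real.sqrt M * Real.tan (Real.sqrt M * (t - cP k1 M))))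
        * Real.cos (Real.sqrt M * (t - cP k1 M))) t := by
  set s := Real.sqrt M
  set c := cP k1 M
  have h1 : HasDerivAt (fun x : ℝ => s * (x - c)) s t := by
    simpa using (((hasDerivAt_id t).sub_const c).const_mul s)
  have h2 := (Real.hasDerivAt_cos (s * (t - c))).comp t h1
  refine h2.congr_deriv (Eq.symm ?_)
  rw [Real.tan_eq_sin_div_cos]
  field_simp

end Deriv

section Eval
variable {k0 k1 M : ℝ}

lemma u_eq_left (hac : alphaCoef k0 M ≤ cP k1 M) {t : ℝ} (hta : t ≤ alphaCoef k0 M) :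
    uu k0 k1 M t = Real.sqrt M * Real.tan (Real.sqrt M * (alphaCoef k0 M - t)) := by
  unfold uu
  rcases lt_or_eq_of_le hta with h | h
  · rw [if_pos h]
  · subst h
    rw [if_neg (lt_irrefl _), if_pos hac, sub_self, mul_zero, Real.tan_zero, mul_zero]

lemma u_eq_mid {t : ℝ} (hat : alphaCoef k0 M ≤ t) (htc : t ≤ cP k1 M) :
    uu k0 k1 M t = 0 := by
  unfold uu
  rw [if_neg (not_lt.2 hat), if_pos htc]

lemma u_eq_right (hac : alphaCoef k0 M ≤ cP k1 M) {t : ℝ} (hct : cP k1 M ≤ t) :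
    uu k0 k1 M t = -(Real.sqrt M * Real.tan (Real.sqrt M * (t - cP k1 M))) := by
  unfold uu
  rcases lt_or_eq_of_le hct with h | h
  · rw [if_neg (not_lt.2 (hac.trans hct)), if_neg (not_le.2 h)]
  · subst h
    rw [if_neg (not_lt.2 hac), if_pos le_rfl, sub_self, mul_zero, Real.tan_zero,
      mul_zero, neg_zero]

lemma w_eq_left (hac : alphaCoef k0 M ≤ cP k1 M) {t : ℝ} (hta : t ≤ alphaCoef k0 M) :
    ww k0 k1 M t = Real.cos (Real.sqrt M * (t - alphaCoef k0 M)) := by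
  unfold ww
  rcases lt_or_eq_of_le hta with h | h
  · rw [if_pos h]
  · subst h
    rw [if_neg (lt_irrefl _), if_pos hac, sub_self, mul_zero, Real.cos_zero]

lemma w_eq_mid {t : ℝ} (hat : alphaCoef k0 M ≤ t) (htc : t ≤ cP k1 M) :
    ww k0 k1 M t = 1 := by
  unfold ww
  rw [if_neg (not_lt.2 hat), if_pos htc]

lemma w_eq_right (hac : alphaCoef k0 M ≤ cP k1 M) {t : ℝ} (hct : cP k1 M ≤ t) :
    ww k0 k1 M t = Real.cos (Real.sqrt M * (t - cP k1 M)) := by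
  unfold ww
  rcases lt_or_eq_of_le hct with h | h
  · rw [if_neg (not_lt.2 (hac.trans hct)), if_neg (not_le.2 h)]
  · subst h
    rw [if_neg (not_lt.2 hac), if_pos le_rfl, sub_self, mul_zero, Real.cos_zero]

lemma tan_mono_bound {x y : ℝ} (hx : 0 ≤ x) (hxy : x ≤ y) (hy : y < π / 2) :
    Real.tan x ≤ Real.tan y := by
  have hpi := Real.pi_div_two_pos
  exact Real.strictMonoOn_tan.monotoneOn ⟨by linarith, by linarith⟩
    ⟨by linarith, hy⟩ hxy

lemma k0sq_le : 0 ≤ k0 → k0 ≤ k1 → k0 ^ 2 ≤ k1 ^ 2 := fun h1 h2 => by nlinarith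

lemma u_bound (hk0 : 0 ≤ k0) (hk01 : k0 ≤ k1) (hM : 0 < M) :
    ∀ t ∈ Icc (0:ℝ) 1, |uu k0 k1 M t| ≤ k1 ^ 2 := by
  intro t ht
  have hs' := hs hM
  have hk1sq : (0:ℝ) ≤ k1 ^ 2 := by positivity
  unfold uu
  split_ifs with h1 h2
  · -- left piece
    have hθ0 : 0 ≤ Real.sqrt M * (alphaCoef k0 M - t) := by
      have : 0 ≤ alphaCoef k0 M - t := by linarith [h1.le]
      positivity
    have hθa : Real.sqrt M * (alphaCoef k0 M - t) ≤ Real.sqrt M * alphaCoef k0 M := by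
      have : alphaCoef k0 M - t ≤ alphaCoef k0 M := by linarith [ht.1]
      exact mul_le_mul_of_nonneg_left this hs'.le
    have hlt := hsa_lt (k0 := k0) hM
    have htan0 : 0 ≤ Real.tan (Real.sqrt M * (alphaCoef k0 M - t)) :=
      Real.tan_nonneg_of_nonneg_of_le_pi_div_two hθ0 (by linarith)
    rw [abs_of_nonneg (by positivity)]
    have hmono := tan_mono_bound hθ0 hθa hlt
    have := tan_hsa (k0 := k0) hM
    calc Real.sqrt M * Real.tan (Real.sqrt M * (alphaCoef k0 M - t))
        ≤ Real.sqrt M * Real.tan (Real.sqrt M * alphaCoef k0 M) :=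
          mul_le_mul_of_nonneg_left hmono hs'.le
      _ = k0 ^ 2 := by rw [this]; field_simp
      _ ≤ k1 ^ 2 := k0sq_le hk0 hk01
  · simpa using hk1sq
  · -- right piece
    have hθ0 : 0 ≤ Real.sqrt M * (t - cP k1 M) := by
      have : 0 ≤ t - cP k1 M := by linarith [not_le.1 h2]
      positivity
    have hθa : Real.sqrt M * (t - cP k1 M) ≤ Real.sqrt M * alphaCoef k1 M := by
      have : t - cP k1 M ≤ alphaCoef k1 M := by
        unfold cP at *; linarith [ht.2]
      exact mul_le_mul_of_nonneg_left this hs'.le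
    have hlt := hsa_lt (k0 := k1) hM
    have htan0 : 0 ≤ Real.tan (Real.sqrt M * (t - cP k1 M)) :=
      Real.tan_nonneg_of_nonneg_of_le_pi_div_two hθ0 (by linarith)
    rw [abs_neg, abs_of_nonneg (by positivity)]
    have hmono := tan_mono_bound hθ0 hθa hlt
    have := tan_hsa (k0 := k1) hM
    calc Real.sqrt M * Real.tan (Real.sqrt M * (t - cP k1 M))
        ≤ Real.sqrt M * Real.tan (Real.sqrt M * alphaCoef k1 M) :=
          mul_le_mul_of_nonneg_left hmono hs'.le
      _ = k1 ^ 2 := by rw [this]; field_simp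

lemma w_bound : ∀ t : ℝ, |ww k0 k1 M t| ≤ 1 := by
  intro t
  unfold ww
  split_ifs
  · exact Real.abs_cos_le_one _
  · simp
  · exact Real.abs_cos_le_one _

lemma measurable_u : Measurable (uu k0 k1 M) := by
  unfold uu
  refine Measurable.ite ?_ ?_ (Measurable.ite ?_ measurable_const ?_)
  · exact measurableSet_Iio
  · have h : Measurable fun x : ℝ => Real.sqrt M * (alphaCoef k0 M - x) := by fun_prop
    exact (Deriv.measurable_tan'.comp h).const_mul _
  · exact measurableSet_Iic
  · have h : Measurable fun x : ℝ => Real.sqrt M * (x - cP k1 M) := by fun_prop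
    exact ((Deriv.measurable_tan'.comp h).const_mul _).neg

lemma measurable_w : Measurable (ww k0 k1 M) := by
  unfold ww
  refine Measurable.ite measurableSet_Iio (by fun_prop) (Measurable.ite measurableSet_Iic
    measurable_const (by fun_prop))

lemma measurable_v : Measurable (vv k0 k1 M) := by
  unfold vv
  refine Measurable.ite ?_ ?_ measurable_const
  · exact (measurableSet_Iio (a := alphaCoef k0 M)).union measurableSet_Ioi
  · exact (((measurable_u).pow_const 2).const_add M).neg

lemma v_bound (hk0 : 0 ≤ k0) (hk01 : k0 ≤ k1) (hM : 0 < M) :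
    ∀ t ∈ Icc (0:ℝ) 1, |vv k0 k1 M t| ≤ M + k1 ^ 4 := by
  intro t ht
  have hu := u_bound hk0 hk01 hM t ht
  have hu2 : (uu k0 k1 M t) ^ 2 ≤ k1 ^ 4 := by
    have := sq_abs (uu k0 k1 M t)
    nlinarith [abs_nonneg (uu k0 k1 M t)]
  unfold vv
  split_ifs
  · rw [abs_neg, abs_of_nonneg (by positivity)]
    linarith
  · simp only [abs_zero]
    positivity

lemma bdd_integrableOn {f : ℝ → ℝ} {C : ℝ} (hm : Measurable f)
    (hb : ∀ t ∈ Icc (0:ℝ) 1, |f t| ≤ C) : IntegrableOn f (Icc (0:ℝ) 1) := by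
  refine Measure.integrableOn_of_bounded (M := C) ?_ hm.aestronglyMeasurable ?_
  · exact (measure_Icc_lt_top).ne
  · exact (ae_restrict_iff' measurableSet_Icc).2 (Filter.Eventually.of_forall
      fun t ht => by simpa [Real.norm_eq_abs] using hb t ht)

lemma integrableOn_u (hk0 : 0 ≤ k0) (hk01 : k0 ≤ k1) (hM : 0 < M) :
    IntegrableOn (uu k0 k1 M) (Icc (0:ℝ) 1) :=
  bdd_integrableOn measurable_u (u_bound hk0 hk01 hM)

lemma integrableOn_v (hk0 : 0 ≤ k0) (hk01 : k0 ≤ k1) (hM : 0 < M) :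
    IntegrableOn (vv k0 k1 M) (Icc (0:ℝ) 1) :=
  bdd_integrableOn measurable_v (v_bound hk0 hk01 hM)

lemma integrableOn_w : IntegrableOn (ww k0 k1 M) (Icc (0:ℝ) 1) :=
  bdd_integrableOn measurable_w (fun t _ => w_bound t)

end Eval

section Rep
variable {k0 k1 M : ℝ}

lemma rep_of_pieces {F f : ℝ → ℝ} {a c : ℝ} (h0a : 0 ≤ a) (hac : a ≤ c) (hc1 : c ≤ 1)
    (hint : IntegrableOn f (Icc (0:ℝ) 1))
    (key1 : ∀ x, 0 ≤ x → x ≤ a → (∫ t in (0:ℝ)..x, f t) = F x - F 0)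
    (key2 : ∀ x, a ≤ x → x ≤ c → (∫ t in a..x, f t) = F x - F a)
    (key3 : ∀ x, c ≤ x → x ≤ 1 → (∫ t in c..x, f t) = F x - F c) :
    ∀ x ∈ Icc (0:ℝ) 1, F x = F 0 + ∫ t in (0:ℝ)..x, f t := by
  have ii : ∀ p q : ℝ, 0 ≤ p → p ≤ q → q ≤ 1 → IntervalIntegrable f volume p q :=
    fun p q hp hpq hq1 =>
    (intervalIntegrable_iff_integrableOn_Ioc_of_le hpq).2
      (hint.mono_set (subset_trans Ioc_subset_Icc_self (Icc_subset_Icc hp hq1)))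
  intro x hx
  rcases le_or_gt x a with h | h
  · rw [key1 x hx.1 h]; ring
  · rcases le_or_gt x c with h' | h'
    · rw [← intervalIntegral.integral_add_adjacent_intervals
        (ii 0 a le_rfl h0a (hac.trans hc1)) (ii a x h0a h.le (h'.trans hc1)),
        key1 a h0a le_rfl, key2 x h.le h']
      ring
    · rw [← intervalIntegral.integral_add_adjacent_intervals
        (ii 0 c le_rfl (h0a.trans hac) hc1) (ii c x (h0a.trans hac) h'.le hx.2),
        ← intervalIntegral.integral_add_adjacent_intervals
        (ii 0 a le_rfl h0a (hac.trans hc1)) (ii a c h0a hac hc1),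
        key1 a h0a le_rfl, key2 c hac le_rfl, key3 x h'.le hx.2]
      ring

lemma ae_ne (a : ℝ) : ∀ᵐ t : ℝ, t ≠ a := by
  have : ({a} : Set ℝ) =ᵐ[volume] (∅ : Set ℝ) := by
    simp [measure_singleton, ae_eq_empty]
  rw [MeasureTheory.ae_iff]
  simpa using measure_singleton a

lemma u_key1 (hk0 : 0 ≤ k0) (hk01 : k0 ≤ k1) (hM : 0 < M)
    (hMeq : 1 - alphaCoef k0 M - alphaCoef k1 M = 1 / M) :
    ∀ x, 0 ≤ x → x ≤ alphaCoef k0 M →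
      (∫ t in (0:ℝ)..x, vv k0 k1 M t) = uu k0 k1 M x - uu k0 k1 M 0 := by
  intro x hx0 hxa
  have hca := hac hM hMeq
  have hcos : ∀ t ∈ Set.uIcc (0:ℝ) x,
      Real.cos (Real.sqrt M * (alphaCoef k0 M - t)) ≠ 0 := by
    intro t ht
    rw [Set.uIcc_of_le hx0] at ht
    exact (cos_pos_left hM ht.1 (ht.2.trans hxa)).ne'
  have hae : ∀ᵐ t : ℝ, t ∈ Ι (0:ℝ) x →
      vv k0 k1 M t = -(M + (Real.sqrt M * Real.tan (Real.sqrt M * (alphaCoef k0 M - t))) ^ 2) := by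
    filter_upwards [ae_ne (alphaCoef k0 M)] with t hta htI
    rw [Set.uIoc_of_le hx0] at htI
    have h1 : t < alphaCoef k0 M := lt_of_le_of_ne (htI.2.trans hxa) hta
    unfold vv
    rw [if_pos (Or.inl h1), u_eq_left hca h1.le]
  rw [intervalIntegral.integral_congr_ae hae]
  have hcont : ContinuousOn
      (fun t => -(M + (Real.sqrt M * Real.tan (Real.sqrt M * (alphaCoef k0 M - t))) ^ 2))
      (Set.uIcc 0 x) := by
    intro t ht
    have h1 : ContinuousAt (fun t : ℝ => Real.sqrt M * (alphaCoef k0 M - t)) t := by fun_prop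
    have h2 : ContinuousAt (fun t : ℝ => Real.tan (Real.sqrt M * (alphaCoef k0 M - t))) t :=
      ContinuousAt.comp (g := Real.tan) (Real.continuousAt_tan.2 (hcos t ht)) h1
    exact (ContinuousAt.neg (continuousAt_const.add
      ((continuousAt_const.mul h2).pow 2))).continuousWithinAt
  rw [intervalIntegral.integral_eq_sub_of_hasDerivAt
    (f := fun t => Real.sqrt M * Real.tan (Real.sqrt M * (alphaCoef k0 M - t)))
    (fun t ht => Deriv.hasDerivAt_U1 hM (hcos t ht)) hcont.intervalIntegrable,
    u_eq_left hca hxa, u_eq_left hca (ha0 hM)]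

lemma u_key2 (hM : 0 < M) (hMeq : 1 - alphaCoef k0 M - alphaCoef k1 M = 1 / M) :
    ∀ x, alphaCoef k0 M ≤ x → x ≤ cP k1 M →
      (∫ t in (alphaCoef k0 M)..x, vv k0 k1 M t) = uu k0 k1 M x - uu k0 k1 M (alphaCoef k0 M) := by
  intro x hax hxc
  have hca := hac hM hMeq
  rw [u_eq_mid hax hxc, u_eq_mid le_rfl hca, sub_self]
  have hae : ∀ᵐ t : ℝ, t ∈ Ι (alphaCoef k0 M) x → vv k0 k1 M t = 0 := by
    refine Filter.Eventually.of_forall fun t htI => ?_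
    rw [Set.uIoc_of_le hax] at htI
    unfold vv
    rw [if_neg]
    push_neg
    exact ⟨htI.1.le, htI.2.trans hxc⟩
  rw [intervalIntegral.integral_congr_ae hae]
  simp

lemma u_key3 (hk0 : 0 ≤ k0) (hk01 : k0 ≤ k1) (hM : 0 < M)
    (hMeq : 1 - alphaCoef k0 M - alphaCoef k1 M = 1 / M) :
    ∀ x, cP k1 M ≤ x → x ≤ 1 →
      (∫ t in (cP k1 M)..x, vv k0 k1 M t) = uu k0 k1 M x - uu k0 k1 M (cP k1 M) := by
  intro x hcx hx1
  have hca := hac hM hMeq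
  have hcos : ∀ t ∈ Set.uIcc (cP k1 M) x,
      Real.cos (Real.sqrt M * (t - cP k1 M)) ≠ 0 := by
    intro t ht
    rw [Set.uIcc_of_le hcx] at ht
    exact (cos_pos_right hM hMeq ht.1 (ht.2.trans hx1)).ne'
  have hae : ∀ᵐ t : ℝ, t ∈ Ι (cP k1 M) x →
      vv k0 k1 M t = -(M + (-(Real.sqrt M * Real.tan (Real.sqrt M * (t - cP k1 M)))) ^ 2) := by
    refine Filter.Eventually.of_forall fun t htI => ?_
    rw [Set.uIoc_of_le hcx] at htI
    unfold vv
    rw [if_pos (Or.inr htI.1), u_eq_right hca htI.1.le]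
  rw [intervalIntegral.integral_congr_ae hae]
  have hcont : ContinuousOn
      (fun t => -(M + (-(Real.sqrt M * Real.tan (Real.sqrt M * (t - cP k1 M)))) ^ 2))
      (Set.uIcc (cP k1 M) x) := by
    intro t ht
    have h1 : ContinuousAt (fun t : ℝ => Real.sqrt M * (t - cP k1 M)) t := by fun_prop
    have h2 : ContinuousAt (fun t : ℝ => Real.tan (Real.sqrt M * (t - cP k1 M))) t :=
      ContinuousAt.comp (g := Real.tan) (Real.continuousAt_tan.2 (hcos t ht)) h1
    exact (ContinuousAt.neg (continuousAt_const.add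
      (((continuousAt_const.mul h2).neg).pow 2))).continuousWithinAt
  rw [intervalIntegral.integral_eq_sub_of_hasDerivAt
    (f := fun t => -(Real.sqrt M * Real.tan (Real.sqrt M * (t - cP k1 M))))
    (fun t ht => Deriv.hasDerivAt_U3 hM (hcos t ht)) hcont.intervalIntegrable,
    u_eq_right hca hcx, u_eq_right hca le_rfl]

lemma u_rep (hk0 : 0 ≤ k0) (hk01 : k0 ≤ k1) (hM : 0 < M)
    (hMeq : 1 - alphaCoef k0 M - alphaCoef k1 M = 1 / M) :
    ∀ x ∈ Icc (0:ℝ) 1, uu k0 k1 M x = uu k0 k1 M 0 + ∫ t in (0:ℝ)..x, vv k0 k1 M t :=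
  rep_of_pieces (ha0 hM) (hac hM hMeq) (hc1 hM) (integrableOn_v hk0 hk01 hM)
    (u_key1 hk0 hk01 hM hMeq) (u_key2 hM hMeq) (u_key3 hk0 hk01 hM hMeq)

lemma integrableOn_uw (hk0 : 0 ≤ k0) (hk01 : k0 ≤ k1) (hM : 0 < M) :
    IntegrableOn (fun t => uu k0 k1 M t * ww k0 k1 M t) (Icc (0:ℝ) 1) := by
  refine bdd_integrableOn (measurable_u.mul measurable_w) (C := k1 ^ 2) fun t ht => ?_
  rw [abs_mul]
  calc |uu k0 k1 M t| * |ww k0 k1 M t| ≤ k1 ^ 2 * 1 :=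
    mul_le_mul (u_bound hk0 hk01 hM t ht) (w_bound t) (abs_nonneg _) (by positivity)
  _ = k1 ^ 2 := mul_one _

lemma integrableOn_uw_sq (hk0 : 0 ≤ k0) (hk01 : k0 ≤ k1) (hM : 0 < M) :
    IntegrableOn (fun t => (uu k0 k1 M t * ww k0 k1 M t) ^ 2) (Icc (0:ℝ) 1) := by
  refine bdd_integrableOn ((measurable_u.mul measurable_w).pow_const 2) (C := k1 ^ 4)
    fun t ht => ?_
  have h1 : |uu k0 k1 M t * ww k0 k1 M t| ≤ k1 ^ 2 := by
    rw [abs_mul]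
    calc |uu k0 k1 M t| * |ww k0 k1 M t| ≤ k1 ^ 2 * 1 :=
      mul_le_mul (u_bound hk0 hk01 hM t ht) (w_bound t) (abs_nonneg _) (by positivity)
    _ = k1 ^ 2 := mul_one _
  rw [abs_pow]
  calc |uu k0 k1 M t * ww k0 k1 M t| ^ 2 ≤ (k1 ^ 2) ^ 2 :=
    pow_le_pow_left₀ (abs_nonneg _) h1 2
  _ = k1 ^ 4 := by ring

lemma w_key1 (hk0 : 0 ≤ k0) (hk01 : k0 ≤ k1) (hM : 0 < M)
    (hMeq : 1 - alphaCoef k0 M - alphaCoef k1 M = 1 / M) :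
    ∀ x, 0 ≤ x → x ≤ alphaCoef k0 M →
      (∫ t in (0:ℝ)..x, uu k0 k1 M t * ww k0 k1 M t) = ww k0 k1 M x - ww k0 k1 M 0 := by
  intro x hx0 hxa
  have hca := hac hM hMeq
  have hcos : ∀ t ∈ Set.uIcc (0:ℝ) x,
      Real.cos (Real.sqrt M * (alphaCoef k0 M - t)) ≠ 0 := by
    intro t ht
    rw [Set.uIcc_of_le hx0] at ht
    exact (cos_pos_left hM ht.1 (ht.2.trans hxa)).ne'
  have hderiv : ∀ t ∈ Set.uIcc (0:ℝ) x,
      HasDerivAt (fun t => Real.cos (Real.sqrt M * (t - alphaCoef k0 M)))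
        (uu k0 k1 M t * ww k0 k1 M t) t := by
    intro t ht
    have ht' := ht
    rw [Set.uIcc_of_le hx0] at ht'
    have := Deriv.hasDerivAt_W1 (k0 := k0) hM (hcos t ht)
    rwa [← u_eq_left hca (ht'.2.trans hxa), ← w_eq_left hca (ht'.2.trans hxa)] at this
  have hii : IntervalIntegrable (fun t => uu k0 k1 M t * ww k0 k1 M t) volume 0 x :=
    (intervalIntegrable_iff_integrableOn_Ioc_of_le hx0).2
      ((integrableOn_uw hk0 hk01 hM).mono_set
        (subset_trans Ioc_subset_Icc_self (Icc_subset_Icc le_rfl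
          (hxa.trans ((hac hM hMeq).trans (hc1 hM))))))
  rw [intervalIntegral.integral_eq_sub_of_hasDerivAt hderiv hii,
    w_eq_left hca hxa, w_eq_left hca (ha0 hM)]

lemma w_key2 (hM : 0 < M) (hMeq : 1 - alphaCoef k0 M - alphaCoef k1 M = 1 / M) :
    ∀ x, alphaCoef k0 M ≤ x → x ≤ cP k1 M →
      (∫ t in (alphaCoef k0 M)..x, uu k0 k1 M t * ww k0 k1 M t)
        = ww k0 k1 M x - ww k0 k1 M (alphaCoef k0 M) := by
  intro x hax hxc
  have hca := hac hM hMeq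
  rw [w_eq_mid hax hxc, w_eq_mid le_rfl hca, sub_self]
  have hae : ∀ᵐ t : ℝ, t ∈ Ι (alphaCoef k0 M) x → uu k0 k1 M t * ww k0 k1 M t = 0 := by
    refine Filter.Eventually.of_forall fun t htI => ?_
    rw [Set.uIoc_of_le hax] at htI
    rw [u_eq_mid htI.1.le (htI.2.trans hxc), zero_mul]
  rw [intervalIntegral.integral_congr_ae hae]
  simp

lemma w_key3 (hk0 : 0 ≤ k0) (hk01 : k0 ≤ k1) (hM : 0 < M)
    (hMeq : 1 - alphaCoef k0 M - alphaCoef k1 M = 1 / M) :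
    ∀ x, cP k1 M ≤ x → x ≤ 1 →
      (∫ t in (cP k1 M)..x, uu k0 k1 M t * ww k0 k1 M t)
        = ww k0 k1 M x - ww k0 k1 M (cP k1 M) := by
  intro x hcx hx1
  have hca := hac hM hMeq
  have hcos : ∀ t ∈ Set.uIcc (cP k1 M) x,
      Real.cos (Real.sqrt M * (t - cP k1 M)) ≠ 0 := by
    intro t ht
    rw [Set.uIcc_of_le hcx] at ht
    exact (cos_pos_right hM hMeq ht.1 (ht.2.trans hx1)).ne'
  have hderiv : ∀ t ∈ Set.uIcc (cP k1 M) x,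
      HasDerivAt (fun t => Real.cos (Real.sqrt M * (t - cP k1 M)))
        (uu k0 k1 M t * ww k0 k1 M t) t := by
    intro t ht
    have ht' := ht
    rw [Set.uIcc_of_le hcx] at ht'
    have := Deriv.hasDerivAt_W3 (k1 := k1) hM (hcos t ht)
    rwa [← u_eq_right hca ht'.1, ← w_eq_right hca ht'.1] at this
  have hii : IntervalIntegrable (fun t => uu k0 k1 M t * ww k0 k1 M t) volume (cP k1 M) x :=
    (intervalIntegrable_iff_integrableOn_Ioc_of_le hcx).2
      ((integrableOn_uw hk0 hk01 hM).mono_set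
        (subset_trans Ioc_subset_Icc_self (Icc_subset_Icc (le_trans (ha0 hM) hca) hx1)))
  rw [intervalIntegral.integral_eq_sub_of_hasDerivAt hderiv hii,
    w_eq_right hca hcx, w_eq_right hca le_rfl]

lemma w_rep (hk0 : 0 ≤ k0) (hk01 : k0 ≤ k1) (hM : 0 < M)
    (hMeq : 1 - alphaCoef k0 M - alphaCoef k1 M = 1 / M) :
    ∀ x ∈ Icc (0:ℝ) 1, ww k0 k1 M x
      = ww k0 k1 M 0 + ∫ t in (0:ℝ)..x, uu k0 k1 M t * ww k0 k1 M t :=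
  rep_of_pieces (ha0 hM) (hac hM hMeq) (hc1 hM) (integrableOn_uw hk0 hk01 hM)
    (w_key1 hk0 hk01 hM hMeq) (w_key2 hM hMeq) (w_key3 hk0 hk01 hM hMeq)

end Rep

section Master
variable {k0 k1 M : ℝ}

lemma u0 (hk0 : 0 ≤ k0) (hM : 0 < M)
    (hMeq : 1 - alphaCoef k0 M - alphaCoef k1 M = 1 / M) :
    uu k0 k1 M 0 = k0 ^ 2 := by
  rw [u_eq_left (hac hM hMeq) (ha0 hM), sub_zero, tan_hsa hM]
  field_simp

lemma u1 (hM : 0 < M) (hMeq : 1 - alphaCoef k0 M - alphaCoef k1 M = 1 / M) :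
    uu k0 k1 M 1 = -(k1 ^ 2) := by
  rw [u_eq_right (hac hM hMeq) (hc1 hM)]
  have h : (1:ℝ) - cP k1 M = alphaCoef k1 M := by unfold cP; ring
  rw [h, tan_hsa hM]
  have := (hs hM).ne'
  field_simp

lemma qv (hM : 0 < M) : ∀ x : ℝ,
    qstar k0 k1 M x - M = vv k0 k1 M x + (uu k0 k1 M x) ^ 2 := by
  intro x
  unfold qstar vv
  by_cases h : alphaCoef k0 M ≤ x ∧ x ≤ 1 - alphaCoef k1 M
  · have h' : ¬(x < alphaCoef k0 M ∨ cP k1 M < x) := by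
      push_neg
      exact ⟨h.1, by unfold cP; exact h.2⟩
    rw [if_pos h, if_neg h', u_eq_mid h.1 (by unfold cP; exact h.2)]
    ring
  · have h' : x < alphaCoef k0 M ∨ cP k1 M < x := by
      rcases not_and_or.1 h with h1 | h2
      · exact Or.inl (not_le.1 h1)
      · exact Or.inr (by unfold cP; exact not_le.1 h2)
    rw [if_neg h, if_pos h']
    ring

lemma measurable_qstar : Measurable (qstar k0 k1 M) := by
  unfold qstar
  refine Measurable.ite ?_ measurable_const measurable_const
  have : {x : ℝ | alphaCoef k0 M ≤ x ∧ x ≤ 1 - alphaCoef k1 M}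
      = Icc (alphaCoef k0 M) (1 - alphaCoef k1 M) := rfl
  rw [this]
  exact measurableSet_Icc

lemma qstar_bound (hM : 0 < M) : ∀ t : ℝ, |qstar k0 k1 M t| ≤ M := by
  intro t
  unfold qstar
  split_ifs
  · rw [abs_of_nonneg hM.le]
  · simpa using hM.le

lemma integrableOn_qstar (hM : 0 < M) : IntegrableOn (qstar k0 k1 M) (Icc (0:ℝ) 1) :=
  bdd_integrableOn measurable_qstar (fun t _ => qstar_bound hM t)

lemma test_continuousOn {y g : ℝ → ℝ}
    (hrep : ∀ x ∈ Icc (0:ℝ) 1, y x = y 0 + ∫ t in (0:ℝ)..x, g t)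
    (hg : IntegrableOn g (Icc (0:ℝ) 1)) : ContinuousOn y (Icc (0:ℝ) 1) := by
  have h1 : ContinuousOn (fun x => y 0 + ∫ t in Ioc (0:ℝ) x, g t) (Icc 0 1) :=
    continuousOn_const.add (intervalIntegral.continuousOn_primitive hg)
  exact h1.congr fun x hx => by
    rw [hrep x hx, intervalIntegral.integral_of_le hx.1]

lemma toII {h : ℝ → ℝ} (hi : IntegrableOn h (Icc (0:ℝ) 1)) :
    IntervalIntegrable h volume 0 1 :=
  (intervalIntegrable_iff_integrableOn_Ioc_of_le zero_le_one).2
    (hi.mono_set Ioc_subset_Icc_self)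

/-- The master identity: for any test function,
numerator = M * denominator + ∫ (g - u y)². -/
lemma master (hk0 : 0 ≤ k0) (hk01 : k0 ≤ k1) (hM : 0 < M)
    (hMeq : 1 - alphaCoef k0 M - alphaCoef k1 M = 1 / M)
    {y g : ℝ → ℝ}
    (hrep : ∀ x ∈ Icc (0:ℝ) 1, y x = y 0 + ∫ t in (0:ℝ)..x, g t)
    (hgint : IntegrableOn g (Icc (0:ℝ) 1))
    (hg2int : IntegrableOn (fun x => (g x) ^ 2) (Icc (0:ℝ) 1)) :
    (∫ x in (0:ℝ)..1, ((g x) ^ 2 + qstar k0 k1 M x * (y x) ^ 2))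
        + k0 ^ 2 * (y 0) ^ 2 + k1 ^ 2 * (y 1) ^ 2
      = M * (∫ x in (0:ℝ)..1, (y x) ^ 2)
        + ∫ x in (0:ℝ)..1, (g x - uu k0 k1 M x * y x) ^ 2 := by
  have ycont : ContinuousOn y (Icc 0 1) := test_continuousOn hrep hgint
  have i_y2 : IntegrableOn (fun x => (y x) ^ 2) (Icc (0:ℝ) 1) :=
    (ycont.pow 2).integrableOn_Icc
  have i_yg : IntegrableOn (fun x => y x * g x) (Icc (0:ℝ) 1) :=
    MeasureTheory.IntegrableOn.continuousOn_mul ycont hgint isCompact_Icc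
  have i_2yg : IntegrableOn (fun x => 2 * (y x * g x)) (Icc (0:ℝ) 1) := i_yg.const_mul 2
  have hubd : ∀ᵐ x ∂(volume.restrict (Icc (0:ℝ) 1)), ‖uu k0 k1 M x‖ ≤ k1 ^ 2 :=
    (ae_restrict_iff' measurableSet_Icc).2 (Filter.Eventually.of_forall
      fun t ht => by simpa [Real.norm_eq_abs] using u_bound hk0 hk01 hM t ht)
  have i_uyg : IntegrableOn (fun x => uu k0 k1 M x * (y x * g x)) (Icc (0:ℝ) 1) :=
    Integrable.bdd_mul i_yg (measurable_u.aestronglyMeasurable.restrict) hubd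
  have hu2bd : ∀ᵐ x ∂(volume.restrict (Icc (0:ℝ) 1)), ‖(uu k0 k1 M x) ^ 2‖ ≤ k1 ^ 4 := by
    filter_upwards [hubd] with x hx
    rw [Real.norm_eq_abs, abs_pow]
    rw [Real.norm_eq_abs] at hx
    calc |uu k0 k1 M x| ^ 2 ≤ (k1 ^ 2) ^ 2 := by
          exact pow_le_pow_left₀ (abs_nonneg _) hx 2
    _ = k1 ^ 4 := by ring
  have i_u2y2 : IntegrableOn (fun x => (uu k0 k1 M x) ^ 2 * (y x) ^ 2) (Icc (0:ℝ) 1) :=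
    Integrable.bdd_mul i_y2 ((measurable_u.pow_const 2).aestronglyMeasurable.restrict) hu2bd
  have hvbd : ∀ᵐ x ∂(volume.restrict (Icc (0:ℝ) 1)), ‖vv k0 k1 M x‖ ≤ M + k1 ^ 4 :=
    (ae_restrict_iff' measurableSet_Icc).2 (Filter.Eventually.of_forall
      fun t ht => by simpa [Real.norm_eq_abs] using v_bound hk0 hk01 hM t ht)
  have i_vy2 : IntegrableOn (fun x => vv k0 k1 M x * (y x) ^ 2) (Icc (0:ℝ) 1) :=
    Integrable.bdd_mul i_y2 (measurable_v.aestronglyMeasurable.restrict) hvbd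
  have hqbd : ∀ᵐ x ∂(volume.restrict (Icc (0:ℝ) 1)), ‖qstar k0 k1 M x‖ ≤ M :=
    Filter.Eventually.of_forall fun t => by
      simpa [Real.norm_eq_abs] using qstar_bound hM t
  have i_qy2 : IntegrableOn (fun x => qstar k0 k1 M x * (y x) ^ 2) (Icc (0:ℝ) 1) :=
    Integrable.bdd_mul i_y2 (measurable_qstar.aestronglyMeasurable.restrict) hqbd
  have i_sq : IntegrableOn (fun x => (g x - uu k0 k1 M x * y x) ^ 2) (Icc (0:ℝ) 1) := by
    have heq : (fun x => (g x - uu k0 k1 M x * y x) ^ 2)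
        = fun x => (g x) ^ 2 - 2 * (uu k0 k1 M x * (y x * g x))
            + (uu k0 k1 M x) ^ 2 * (y x) ^ 2 := funext fun x => by ring
    rw [heq]
    exact (hg2int.sub (i_uyg.const_mul 2)).add i_u2y2
  -- step 1: y² is an indefinite integral of 2 y g
  have ibp1 : ∀ x ∈ Icc (0:ℝ) 1, (y x) ^ 2 = (y 0) ^ 2 + ∫ t in (0:ℝ)..x, 2 * (y t * g t) := by
    intro x hx
    have hsub : Icc (0:ℝ) x ⊆ Icc 0 1 := Icc_subset_Icc le_rfl hx.2
    have h := ibp hx.1 (hgint.mono_set hsub) (hgint.mono_set hsub)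
      (fun t ht => hrep t (hsub ht)) (fun t ht => hrep t (hsub ht))
    have h2 : (∫ t in (0:ℝ)..x, 2 * (y t * g t))
        = ∫ t in (0:ℝ)..x, (y t * g t + g t * y t) :=
      intervalIntegral.integral_congr fun t _ => by ring
    rw [h2, h]; ring
  -- step 2: integrate (u y²)' over [0,1]
  have ibp2 : (∫ t in (0:ℝ)..1, (uu k0 k1 M t * (2 * (y t * g t)) + vv k0 k1 M t * (y t) ^ 2))
      = uu k0 k1 M 1 * (y 1) ^ 2 - uu k0 k1 M 0 * (y 0) ^ 2 :=
    ibp zero_le_one (integrableOn_v hk0 hk01 hM) i_2yg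
      (u_rep hk0 hk01 hM hMeq) ibp1
  rw [u0 hk0 hM hMeq, u1 hM hMeq] at ibp2
  -- step 3: pointwise identity
  have hpt : ∀ t : ℝ, (g t) ^ 2 + qstar k0 k1 M t * (y t) ^ 2
      = (M * (y t) ^ 2 + (g t - uu k0 k1 M t * y t) ^ 2)
        + (uu k0 k1 M t * (2 * (y t * g t)) + vv k0 k1 M t * (y t) ^ 2) := by
    intro t
    have h := qv (k0 := k0) (k1 := k1) hM t
    linear_combination (y t ^ 2) * h
  have hii1 : IntervalIntegrable
      (fun t => M * (y t) ^ 2 + (g t - uu k0 k1 M t * y t) ^ 2) volume 0 1 :=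
    toII ((i_y2.const_mul M).add i_sq)
  have hii2 : IntervalIntegrable
      (fun t => uu k0 k1 M t * (2 * (y t * g t)) + vv k0 k1 M t * (y t) ^ 2) volume 0 1 := by
    have : (fun t => uu k0 k1 M t * (2 * (y t * g t)) + vv k0 k1 M t * (y t) ^ 2)
        = fun t => 2 * (uu k0 k1 M t * (y t * g t)) + vv k0 k1 M t * (y t) ^ 2 :=
      funext fun t => by ring
    rw [this]
    exact toII ((i_uyg.const_mul 2).add i_vy2)
  have hsplit : (∫ x in (0:ℝ)..1, ((g x) ^ 2 + qstar k0 k1 M x * (y x) ^ 2))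
      = (∫ x in (0:ℝ)..1, (M * (y x) ^ 2 + (g x - uu k0 k1 M x * y x) ^ 2))
        + ∫ x in (0:ℝ)..1, (uu k0 k1 M x * (2 * (y x * g x)) + vv k0 k1 M x * (y x) ^ 2) := by
    rw [← intervalIntegral.integral_add hii1 hii2]
    exact intervalIntegral.integral_congr fun t _ => hpt t
  rw [hsplit, ibp2,
    intervalIntegral.integral_add (toII (i_y2.const_mul M)) (toII i_sq),
    intervalIntegral.integral_const_mul]
  ring

end Master

section Final
variable {k0 k1 M : ℝ}

lemma integrableOn_wsq : IntegrableOn (fun x => (ww k0 k1 M x) ^ 2) (Icc (0:ℝ) 1) := by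
  refine bdd_integrableOn (measurable_w.pow_const 2) (C := 1) fun t _ => ?_
  rw [abs_pow]
  calc |ww k0 k1 M t| ^ 2 ≤ 1 ^ 2 := pow_le_pow_left₀ (abs_nonneg _) (w_bound t) 2
  _ = 1 := one_pow 2

lemma w_lb (hM : 0 < M) (hMeq : 1 - alphaCoef k0 M - alphaCoef k1 M = 1 / M) :
    ∀ t ∈ Icc (0:ℝ) 1,
      min (Real.cos (Real.sqrt M * alphaCoef k0 M)) (Real.cos (Real.sqrt M * alphaCoef k1 M))
        ≤ ww k0 k1 M t := by
  intro t ht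
  have hca := hac hM hMeq
  have hs' := hs hM
  have hpi := Real.pi_pos
  rcases le_or_gt t (alphaCoef k0 M) with h | h
  · rw [w_eq_left hca h]
    have e1 : Real.sqrt M * (t - alphaCoef k0 M) = -(Real.sqrt M * (alphaCoef k0 M - t)) := by
      ring
    rw [e1, Real.cos_neg]
    refine le_trans (min_le_left _ _) ?_
    refine Real.cos_le_cos_of_nonneg_of_le_pi ?_ ?_ ?_
    · have : 0 ≤ alphaCoef k0 M - t := by linarith
      positivity
    · have := hsa_lt (k0 := k0) hM
      linarith
    · have : alphaCoef k0 M - t ≤ alphaCoef k0 M := by linarith [ht.1]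
      exact mul_le_mul_of_nonneg_left this hs'.le
  · rcases le_or_gt t (cP k1 M) with h2 | h2
    · rw [w_eq_mid h.le h2]
      exact le_trans (min_le_left _ _) (Real.cos_le_one _)
    · rw [w_eq_right hca h2.le]
      refine le_trans (min_le_right _ _) ?_
      refine Real.cos_le_cos_of_nonneg_of_le_pi ?_ ?_ ?_
      · have : 0 ≤ t - cP k1 M := by linarith
        positivity
      · have := hsa_lt (k0 := k1) hM
        linarith
      · have : t - cP k1 M ≤ alphaCoef k1 M := by unfold cP at h2 ⊢; linarith [ht.2]
        exact mul_le_mul_of_nonneg_left this hs'.le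

lemma wlb_pos (hM : 0 < M) :
    0 < min (Real.cos (Real.sqrt M * alphaCoef k0 M))
        (Real.cos (Real.sqrt M * alphaCoef k1 M)) := by
  have hpi := Real.pi_div_two_pos
  refine lt_min ?_ ?_
  · exact Real.cos_pos_of_mem_Ioo ⟨by linarith [hsa_nonneg (k0 := k0) hM],
      hsa_lt (k0 := k0) hM⟩
  · exact Real.cos_pos_of_mem_Ioo ⟨by linarith [hsa_nonneg (k0 := k1) hM],
      hsa_lt (k0 := k1) hM⟩

lemma wsq_pos (hM : 0 < M) (hMeq : 1 - alphaCoef k0 M - alphaCoef k1 M = 1 / M) :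
    0 < ∫ x in (0:ℝ)..1, (ww k0 k1 M x) ^ 2 := by
  set κ := min (Real.cos (Real.sqrt M * alphaCoef k0 M))
    (Real.cos (Real.sqrt M * alphaCoef k1 M)) with hκdef
  have hκ : 0 < κ := wlb_pos hM
  calc (0:ℝ) < κ ^ 2 := by positivity
  _ = ∫ _x in (0:ℝ)..1, κ ^ 2 := by
      rw [intervalIntegral.integral_const]; simp
  _ ≤ ∫ x in (0:ℝ)..1, (ww k0 k1 M x) ^ 2 := by
      refine intervalIntegral.integral_mono_on zero_le_one intervalIntegrable_const
        (toII integrableOn_wsq) fun t ht => ?_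
      exact pow_le_pow_left₀ hκ.le (w_lb hM hMeq t ht) 2

lemma qstar_nonneg (hM : 0 < M) : ∀ x : ℝ, 0 ≤ qstar k0 k1 M x := by
  intro x
  unfold qstar
  split_ifs
  · exact hM.le
  · exact le_refl 0

lemma qstar_int (hk0 : 0 ≤ k0) (hk01 : k0 ≤ k1) (hM : 0 < M)
    (hMeq : 1 - alphaCoef k0 M - alphaCoef k1 M = 1 / M) :
    (∫ x in (0:ℝ)..1, qstar k0 k1 M x) = 1 := by
  have hca := hac hM hMeq
  have ha := ha0 (k0 := k0) hM
  have hc1' := hc1 (k1 := k1) (M := M) hM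
  have hii : ∀ p q : ℝ, 0 ≤ p → p ≤ q → q ≤ 1 →
      IntervalIntegrable (qstar k0 k1 M) volume p q := fun p q hp hpq hq1 =>
    (intervalIntegrable_iff_integrableOn_Ioc_of_le hpq).2
      ((integrableOn_qstar hM).mono_set
        (subset_trans Ioc_subset_Icc_self (Icc_subset_Icc hp hq1)))
  have h1 : (∫ x in (0:ℝ)..(alphaCoef k0 M), qstar k0 k1 M x) = 0 := by
    have hae : ∀ᵐ t : ℝ, t ∈ Ι (0:ℝ) (alphaCoef k0 M) → qstar k0 k1 M t = 0 := by
      filter_upwards [ae_ne (alphaCoef k0 M)] with t hne htI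
      rw [Set.uIoc_of_le ha] at htI
      have : t < alphaCoef k0 M := lt_of_le_of_ne htI.2 hne
      unfold qstar
      rw [if_neg (fun hcon => absurd hcon.1 (not_le.2 this))]
    rw [intervalIntegral.integral_congr_ae hae]
    simp
  have h2 : (∫ x in (alphaCoef k0 M)..(cP k1 M), qstar k0 k1 M x)
      = M * (cP k1 M - alphaCoef k0 M) := by
    have hae : ∀ᵐ t : ℝ, t ∈ Ι (alphaCoef k0 M) (cP k1 M) → qstar k0 k1 M t = M := by
      refine Filter.Eventually.of_forall fun t htI => ?_
      rw [Set.uIoc_of_le hca] at htI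
      unfold qstar
      rw [if_pos ⟨htI.1.le, by unfold cP at htI; exact htI.2⟩]
    rw [intervalIntegral.integral_congr_ae hae, intervalIntegral.integral_const,
      smul_eq_mul, mul_comm]
  have h3 : (∫ x in (cP k1 M)..(1:ℝ), qstar k0 k1 M x) = 0 := by
    have hae : ∀ᵐ t : ℝ, t ∈ Ι (cP k1 M) (1:ℝ) → qstar k0 k1 M t = 0 := by
      refine Filter.Eventually.of_forall fun t htI => ?_
      rw [Set.uIoc_of_le hc1'] at htI
      unfold qstar
      rw [if_neg (fun hcon => absurd hcon.2 (not_le.2 (by unfold cP at htI; exact htI.1)))]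
    rw [intervalIntegral.integral_congr_ae hae]
    simp
  rw [← intervalIntegral.integral_add_adjacent_intervals
      (hii 0 (cP k1 M) le_rfl (ha.trans hca) hc1') (hii (cP k1 M) 1 (ha.trans hca) hc1' le_rfl),
    ← intervalIntegral.integral_add_adjacent_intervals
      (hii 0 (alphaCoef k0 M) le_rfl ha (hca.trans hc1')) (hii (alphaCoef k0 M) (cP k1 M) ha hca hc1'),
    h1, h2, h3]
  have : cP k1 M - alphaCoef k0 M = 1 / M := by unfold cP; linarith
  rw [this]
  field_simp
  norm_num

lemma qstar_wsq (hM : 0 < M) (hMeq : 1 - alphaCoef k0 M - alphaCoef k1 M = 1 / M) :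
    ∀ x : ℝ, qstar k0 k1 M x * (ww k0 k1 M x) ^ 2 = qstar k0 k1 M x := by
  intro x
  by_cases h : alphaCoef k0 M ≤ x ∧ x ≤ 1 - alphaCoef k1 M
  · rw [w_eq_mid h.1 (show x ≤ cP k1 M by unfold cP; exact h.2)]
    ring
  · have : qstar k0 k1 M x = 0 := by unfold qstar; rw [if_neg h]
    rw [this, zero_mul]

lemma w_isTest (hk0 : 0 ≤ k0) (hk01 : k0 ≤ k1) (hM : 0 < M)
    (hMeq : 1 - alphaCoef k0 M - alphaCoef k1 M = 1 / M) :
    IsTest (ww k0 k1 M) (fun t => uu k0 k1 M t * ww k0 k1 M t) :=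
  ⟨w_rep hk0 hk01 hM hMeq, integrableOn_uw hk0 hk01 hM, integrableOn_uw_sq hk0 hk01 hM⟩

lemma rayleigh_ge (hk0 : 0 ≤ k0) (hk01 : k0 ≤ k1) (hM : 0 < M)
    (hMeq : 1 - alphaCoef k0 M - alphaCoef k1 M = 1 / M) :
    ∀ r ∈ RayleighSet k0 k1 (qstar k0 k1 M), M ≤ r := by
  rintro r ⟨y, g, ⟨hrep, hgi, hg2i⟩, hD, rfl⟩
  have hm := master hk0 hk01 hM hMeq hrep hgi hg2i
  have hsqnn : 0 ≤ ∫ x in (0:ℝ)..1, (g x - uu k0 k1 M x * y x) ^ 2 :=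
    intervalIntegral.integral_nonneg zero_le_one fun t _ => sq_nonneg _
  rw [le_div_iff₀ hD]
  linarith

lemma mem_rayleigh_w (hk0 : 0 ≤ k0) (hk01 : k0 ≤ k1) (hM : 0 < M)
    (hMeq : 1 - alphaCoef k0 M - alphaCoef k1 M = 1 / M) :
    M ∈ RayleighSet k0 k1 (qstar k0 k1 M) := by
  refine ⟨ww k0 k1 M, fun t => uu k0 k1 M t * ww k0 k1 M t,
    w_isTest hk0 hk01 hM hMeq, wsq_pos hM hMeq, ?_⟩
  have hm := master hk0 hk01 hM hMeq (w_rep hk0 hk01 hM hMeq)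
    (integrableOn_uw hk0 hk01 hM) (integrableOn_uw_sq hk0 hk01 hM)
  have hzero : (∫ x in (0:ℝ)..1,
      (uu k0 k1 M x * ww k0 k1 M x - uu k0 k1 M x * ww k0 k1 M x) ^ 2) = 0 := by
    simp
  rw [hzero, add_zero] at hm
  have hD := wsq_pos (k0 := k0) hM hMeq
  rw [hm]
  field_simp

lemma lam1_qstar (hk0 : 0 ≤ k0) (hk01 : k0 ≤ k1) (hM : 0 < M)
    (hMeq : 1 - alphaCoef k0 M - alphaCoef k1 M = 1 / M) :
    lam1 k0 k1 (qstar k0 k1 M) = M := by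
  have hmem := mem_rayleigh_w hk0 hk01 hM hMeq
  have hge := rayleigh_ge hk0 hk01 hM hMeq
  exact le_antisymm (csInf_le ⟨M, fun r hr => hge r hr⟩ hmem)
    (le_csInf ⟨M, hmem⟩ fun r hr => hge r hr)

lemma rayleigh_nonneg {q : ℝ → ℝ}
    (hq0 : ∀ᵐ x ∂(volume.restrict (Icc (0:ℝ) 1)), 0 ≤ q x) :
    ∀ r ∈ RayleighSet k0 k1 q, 0 ≤ r := by
  rintro r ⟨y, g, hT, hD, rfl⟩
  refine div_nonneg ?_ hD.le
  have h1 : 0 ≤ ∫ x in (0:ℝ)..1, ((g x) ^ 2 + q x * (y x) ^ 2) := by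
    refine intervalIntegral.integral_nonneg_of_ae_restrict zero_le_one ?_
    filter_upwards [hq0] with x hx
    exact add_nonneg (sq_nonneg _) (mul_nonneg hx (sq_nonneg _))
  have h2 : 0 ≤ k0 ^ 2 * (y 0) ^ 2 := by positivity
  have h3 : 0 ≤ k1 ^ 2 * (y 1) ^ 2 := by positivity
  linarith

lemma lam1_le (hk0 : 0 ≤ k0) (hk01 : k0 ≤ k1) (hM : 0 < M)
    (hMeq : 1 - alphaCoef k0 M - alphaCoef k1 M = 1 / M)
    {q : ℝ → ℝ} (hqi : IntegrableOn q (Icc (0:ℝ) 1))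
    (hq0 : ∀ᵐ x ∂(volume.restrict (Icc (0:ℝ) 1)), 0 ≤ q x)
    (hq1 : (∫ x in (0:ℝ)..1, q x) = 1) :
    lam1 k0 k1 q ≤ M := by
  have hD := wsq_pos (k0 := k0) (k1 := k1) hM hMeq
  have wcont : ContinuousOn (ww k0 k1 M) (Icc 0 1) :=
    test_continuousOn (w_rep hk0 hk01 hM hMeq) (integrableOn_uw hk0 hk01 hM)
  have i_qw2 : IntegrableOn (fun x => q x * (ww k0 k1 M x) ^ 2) (Icc (0:ℝ) 1) :=
    MeasureTheory.IntegrableOn.mul_continuousOn hqi (wcont.pow 2) isCompact_Icc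
  have i_qsw2 : IntegrableOn (fun x => qstar k0 k1 M x * (ww k0 k1 M x) ^ 2) (Icc (0:ℝ) 1) :=
    MeasureTheory.IntegrableOn.mul_continuousOn (integrableOn_qstar hM)
      (wcont.pow 2) isCompact_Icc
  have i_gw2 : IntegrableOn (fun x => (uu k0 k1 M x * ww k0 k1 M x) ^ 2) (Icc (0:ℝ) 1) :=
    integrableOn_uw_sq hk0 hk01 hM
  -- master identity for w with qstar
  have hm := master hk0 hk01 hM hMeq (w_rep hk0 hk01 hM hMeq)
    (integrableOn_uw hk0 hk01 hM) (integrableOn_uw_sq hk0 hk01 hM)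
  have hzero : (∫ x in (0:ℝ)..1,
      (uu k0 k1 M x * ww k0 k1 M x - uu k0 k1 M x * ww k0 k1 M x) ^ 2) = 0 := by simp
  rw [hzero, add_zero] at hm
  -- split both combined integrals
  have hsplit1 : (∫ x in (0:ℝ)..1, ((uu k0 k1 M x * ww k0 k1 M x) ^ 2
      + qstar k0 k1 M x * (ww k0 k1 M x) ^ 2))
      = (∫ x in (0:ℝ)..1, (uu k0 k1 M x * ww k0 k1 M x) ^ 2)
        + ∫ x in (0:ℝ)..1, qstar k0 k1 M x * (ww k0 k1 M x) ^ 2 :=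
    intervalIntegral.integral_add (toII i_gw2) (toII i_qsw2)
  have hsplit2 : (∫ x in (0:ℝ)..1, ((uu k0 k1 M x * ww k0 k1 M x) ^ 2
      + q x * (ww k0 k1 M x) ^ 2))
      = (∫ x in (0:ℝ)..1, (uu k0 k1 M x * ww k0 k1 M x) ^ 2)
        + ∫ x in (0:ℝ)..1, q x * (ww k0 k1 M x) ^ 2 :=
    intervalIntegral.integral_add (toII i_gw2) (toII i_qw2)
  -- ∫ qstar w² = 1
  have hqsw : (∫ x in (0:ℝ)..1, qstar k0 k1 M x * (ww k0 k1 M x) ^ 2) = 1 := by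
    rw [intervalIntegral.integral_congr (fun t _ => qstar_wsq hM hMeq t)]
    exact qstar_int hk0 hk01 hM hMeq
  -- ∫ q w² ≤ 1
  have hqw : (∫ x in (0:ℝ)..1, q x * (ww k0 k1 M x) ^ 2) ≤ 1 := by
    have hstep : (∫ x in (0:ℝ)..1, q x * (ww k0 k1 M x) ^ 2) ≤ ∫ x in (0:ℝ)..1, q x := by
      rw [intervalIntegral.integral_of_le zero_le_one,
        intervalIntegral.integral_of_le zero_le_one]
      refine integral_mono_ae (i_qw2.mono_set Ioc_subset_Icc_self)
        (hqi.mono_set Ioc_subset_Icc_self) ?_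
      filter_upwards [ae_restrict_of_ae_restrict_of_subset Ioc_subset_Icc_self hq0] with x hx
      have hw2 : (ww k0 k1 M x) ^ 2 ≤ 1 := by
        have := w_bound (k0 := k0) (k1 := k1) (M := M) x
        nlinarith [abs_nonneg (ww k0 k1 M x), sq_abs (ww k0 k1 M x)]
      calc q x * (ww k0 k1 M x) ^ 2 ≤ q x * 1 := mul_le_mul_of_nonneg_left hw2 hx
      _ = q x := mul_one _
    linarith [hq1]
  -- the Rayleigh quotient of w for q
  have hmem : ((∫ x in (0:ℝ)..1, ((fun t => uu k0 k1 M t * ww k0 k1 M t) x ^ 2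
        + q x * (ww k0 k1 M x) ^ 2))
        + k0 ^ 2 * (ww k0 k1 M 0) ^ 2 + k1 ^ 2 * (ww k0 k1 M 1) ^ 2)
        / (∫ x in (0:ℝ)..1, (ww k0 k1 M x) ^ 2) ∈ RayleighSet k0 k1 q :=
    ⟨ww k0 k1 M, fun t => uu k0 k1 M t * ww k0 k1 M t,
      w_isTest hk0 hk01 hM hMeq, hD, rfl⟩
  have hle : ((∫ x in (0:ℝ)..1, ((uu k0 k1 M x * ww k0 k1 M x) ^ 2
        + q x * (ww k0 k1 M x) ^ 2))
        + k0 ^ 2 * (ww k0 k1 M 0) ^ 2 + k1 ^ 2 * (ww k0 k1 M 1) ^ 2)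
        / (∫ x in (0:ℝ)..1, (ww k0 k1 M x) ^ 2) ≤ M := by
    rw [div_le_iff₀ hD, hsplit2]
    rw [hsplit1, hqsw] at hm
    linarith
  exact le_trans (csInf_le ⟨0, fun r hr => rayleigh_nonneg hq0 r hr⟩ hmem) hle

end Final

end SL


theorem stmt1 (k0 k1 : ℝ) (hk0 : 0 ≤ k0) (hk01 : k0 ≤ k1)
    (M : ℝ) (hM : 0 < M)
    (hMeq : 1 - alphaCoef k0 M - alphaCoef k1 M = 1 / M) :
    (∀ x : ℝ, 0 ≤ qstar k0 k1 M x) ∧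
    (∫ x in (0:ℝ)..1, qstar k0 k1 M x) = 1 ∧
    lam1 k0 k1 (qstar k0 k1 M) = M ∧
    (∀ q : ℝ → ℝ, IntegrableOn q (Icc (0:ℝ) 1) →
      (∀ᵐ x ∂(volume.restrict (Icc (0:ℝ) 1)), 0 ≤ q x) →
      (∫ x in (0:ℝ)..1, q x) = 1 → lam1 k0 k1 q ≤ M) ∧
    IsGreatest { r : ℝ | ∃ q : ℝ → ℝ, IntegrableOn q (Icc (0:ℝ) 1) ∧
      (∀ᵐ x ∂(volume.restrict (Icc (0:ℝ) 1)), 0 ≤ q x) ∧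
      (∫ x in (0:ℝ)..1, q x) = 1 ∧ r = lam1 k0 k1 q } M := by
  have h1 : ∀ x : ℝ, 0 ≤ qstar k0 k1 M x := SL.qstar_nonneg hM
  have h2 := SL.qstar_int hk0 hk01 hM hMeq
  have h3 := SL.lam1_qstar hk0 hk01 hM hMeq
  refine ⟨h1, h2, h3, fun q hqi hq0 hq1 => SL.lam1_le hk0 hk01 hM hMeq hqi hq0 hq1, ?_, ?_⟩
  · exact ⟨qstar k0 k1 M, SL.integrableOn_qstar hM,
      Filter.Eventually.of_forall fun x => h1 x, h2, h3.symm⟩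
  · rintro r ⟨q, hqi, hq0, hq1, rfl⟩
    exact SL.lam1_le hk0 hk01 hM hMeq hqi hq0 hq1
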